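/- arXiv:1806.08336 — 2 statements merged into one kernel-verified Lean document; each statement's English description precedes it below -/
import Mathlib

section
/- Under the hypotheses (H2) on f (Lipschitz with constant L_f), (H3) on g_i (Lipschitz with constant L_{g_i}), (H4) on φ (with constant C_φ), and with 0 < δ ≤ 1, ξ > 0: if g, h satisfy |g(t)−h(t)|^δ ≤ C₁ φ(t)^δ for t ∈ (s_i,t_{i+1}] and |g(t)−h(t)|^δ ≤ C₂ ξ^δ for t ∈ (t_i,s_i], then for all t ∈ (s_i,t_{i+1}], |g_i(s_i,g(t_i^+)) − g_i(s_i,h(t_i^+)) + (1/Γ(α))∫_{s_i}^t N_ψ^α(t,s)(f(s,g(s)) − f(s,h(s))) ds|^δ ≤ (L_{g_i}^δ + L_f^δ C_φ^δ)(C₁ + C₂)(φ(t)^δ + ξ^δ). -/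
open intervalIntegral

private lemma add_rpow_le_rpow_add {a b δ : ℝ} (ha : 0 ≤ a) (hb : 0 ≤ b)
    (h0 : 0 ≤ δ) (h1 : δ ≤ 1) : (a + b) ^ δ ≤ a ^ δ + b ^ δ := by
  have h := NNReal.rpow_add_le_add_rpow (⟨a, ha⟩ : NNReal) ⟨b, hb⟩ h0 h1
  have := NNReal.coe_le_coe.2 h
  push_cast [NNReal.coe_rpow] at this
  exact this

theorem stmt_13 (T tᵢ sᵢ tᵢ₁ : ℝ) (h0ti : 0 ≤ tᵢ) (htisi : tᵢ ≤ sᵢ)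
    (hsiti1 : sᵢ < tᵢ₁) (hti1T : tᵢ₁ ≤ T)
    (f : ℝ → ℝ → ℝ) (Lf : ℝ) (hLf : 0 ≤ Lf)
    (hf : ∀ t u v, |f t u - f t v| ≤ Lf * |u - v|)
    (gi : ℝ → ℝ → ℝ) (Lgi : ℝ) (hLgi : 0 ≤ Lgi)
    (hgi : ∀ t u v, |gi t u - gi t v| ≤ Lgi * |u - v|)
    (ψ : ℝ → ℝ) (hψ : ContDiff ℝ 1 ψ) (hmono : StrictMonoOn ψ (Set.Icc 0 T))
    (hψ' : ∀ t ∈ Set.Icc 0 T, 0 < deriv ψ t)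
    (α : ℝ) (hα0 : 0 < α) (hα1 : α ≤ 1)
    (δ ξ : ℝ) (hδ0 : 0 < δ) (hδ1 : δ ≤ 1) (hξ : 0 < ξ)
    (φ : ℝ → ℝ) (hφmono : MonotoneOn φ (Set.Icc 0 T))
    (hφ0 : ∀ t ∈ Set.Icc 0 T, 0 ≤ φ t)
    (Cφ : ℝ) (hCφ : 0 ≤ Cφ)
    (hH4 : ∀ t ∈ Set.Icc 0 T,
      (1 / Real.Gamma α) * ∫ s in sᵢ..t, deriv ψ s * (ψ t - ψ s) ^ (α - 1) * φ s ≤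
        Cφ * φ t)
    (C₁ C₂ : ℝ) (hC₁ : 0 ≤ C₁) (hC₂ : 0 ≤ C₂)
    (g h : ℝ → ℝ)
    (hgh1 : ∀ t ∈ Set.Ioc sᵢ tᵢ₁, |g t - h t| ^ δ ≤ C₁ * φ t ^ δ)
    (gp hp : ℝ) (hgh2 : |gp - hp| ^ δ ≤ C₂ * ξ ^ δ) :
    ∀ t ∈ Set.Ioc sᵢ tᵢ₁,
      |gi sᵢ gp - gi sᵢ hp +
          (1 / Real.Gamma α) * ∫ s in sᵢ..t,
            deriv ψ s * (ψ t - ψ s) ^ (α - 1) * (f s (g s) - f s (h s))| ^ δ ≤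
        (Lgi ^ δ + Lf ^ δ * Cφ ^ δ) * (C₁ + C₂) * (φ t ^ δ + ξ ^ δ) := by
  intro t ht
  obtain ⟨hst, htt1⟩ := ht
  have hs0 : (0 : ℝ) ≤ sᵢ := le_trans h0ti htisi
  have htT : t ≤ T := le_trans htt1 hti1T
  have htmem : t ∈ Set.Icc 0 T := ⟨le_trans hs0 hst.le, htT⟩
  have hsub : Set.Icc sᵢ t ⊆ Set.Icc 0 T := Set.Icc_subset_Icc hs0 htT
  have hGamma : 0 < Real.Gamma α := Real.Gamma_pos_of_pos hα0
  set c : ℝ := 1 / Real.Gamma α with hc_def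
  have hc : 0 < c := by positivity
  set A : ℝ := gi sᵢ gp - gi sᵢ hp with hA_def
  set N : ℝ → ℝ := fun s => deriv ψ s * (ψ t - ψ s) ^ (α - 1) with hN_def
  have hφt : 0 ≤ φ t := hφ0 t htmem
  have hξδ : 0 ≤ ξ ^ δ := Real.rpow_nonneg hξ.le _
  have hφtδ : 0 ≤ φ t ^ δ := Real.rpow_nonneg hφt _
  -- nonnegativity of N on Icc sᵢ t
  have hNnonneg : ∀ s ∈ Set.Icc sᵢ t, 0 ≤ N s := by
    intro s hs
    have hs' : s ∈ Set.Icc 0 T := hsub hs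
    have h1 : 0 < deriv ψ s := hψ' s hs'
    have h2 : 0 ≤ ψ t - ψ s := by
      have := hmono.monotoneOn hs' htmem hs.2
      linarith
    exact mul_nonneg h1.le (Real.rpow_nonneg h2 _)
  -- integrability of N
  have hNint : MeasureTheory.IntegrableOn N (Set.Ioc sᵢ t) := by
    apply intervalIntegral.integrableOn_deriv_of_nonneg
      (g := fun s => -((ψ t - ψ s) ^ α) / α)
    · exact (((continuous_const.sub hψ.continuous).continuousOn.rpow_const
        (fun x _ => Or.inr hα0.le)).neg).div_const _
    · intro x hx
      have hx' : x ∈ Set.Icc 0 T := hsub ⟨hx.1.le, hx.2.le⟩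
      have hpos : 0 < ψ t - ψ x := sub_pos.2 (hmono hx' htmem hx.2)
      have hd1 : HasDerivAt (fun s => ψ t - ψ s) (-deriv ψ x) x :=
        (((hψ.differentiable one_ne_zero) x).hasDerivAt).const_sub (ψ t)
      have hd2 : HasDerivAt (fun s => (ψ t - ψ s) ^ α)
          (α * (ψ t - ψ x) ^ (α - 1) * (-deriv ψ x)) x :=
        (Real.hasDerivAt_rpow_const (p := α) (Or.inl hpos.ne')).comp x (h := fun s => ψ t - ψ s) hd1
      have hd3 : HasDerivAt (fun s => -((ψ t - ψ s) ^ α) / α)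
          (-(α * (ψ t - ψ x) ^ (α - 1) * -deriv ψ x) / α) x := (hd2.neg).div_const α
      convert hd3 using 1
      show deriv ψ x * (ψ t - ψ x) ^ (α - 1) = _
      field_simp
    · intro x hx; exact hNnonneg x ⟨hx.1.le, hx.2.le⟩
  -- integrability of N * φ
  have hφmeas : AEMeasurable φ (MeasureTheory.volume.restrict (Set.Ioc sᵢ t)) :=
    aemeasurable_restrict_of_monotoneOn measurableSet_Ioc
      (hφmono.mono (fun x hx => hsub ⟨hx.1.le, hx.2⟩))
  have hNmeas : Measurable N := by
    have h1 : Measurable ψ := hψ.continuous.measurable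
    have h2 : Measurable (deriv ψ) := (hψ.continuous_deriv le_rfl).measurable
    fun_prop
  have hNφ : MeasureTheory.IntegrableOn (fun s => N s * φ s) (Set.Ioc sᵢ t) := by
    apply MeasureTheory.Integrable.mono' (g := fun s => N s * φ t)
      (hNint.mul_const _)
      ((hNmeas.aemeasurable.mul hφmeas).aestronglyMeasurable)
    refine (MeasureTheory.ae_restrict_iff' measurableSet_Ioc).2
      (Filter.Eventually.of_forall fun s hs => ?_)
    have hs' : s ∈ Set.Icc sᵢ t := ⟨hs.1.le, hs.2⟩
    have hN0 := hNnonneg s hs'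
    have hφs : 0 ≤ φ s := hφ0 s (hsub hs')
    have hφle : φ s ≤ φ t := hφmono (hsub hs') htmem hs.2
    rw [Real.norm_eq_abs, Pi.mul_apply, abs_of_nonneg (mul_nonneg hN0 hφs)]
    exact mul_le_mul_of_nonneg_left hφle hN0
  have hNφ_int : IntervalIntegrable (fun s => N s * φ s) MeasureTheory.volume sᵢ t :=
    (intervalIntegrable_iff_integrableOn_Ioc_of_le hst.le).2 hNφ
  -- pointwise bound for difference of g and h
  set K : ℝ := Lf * C₁ ^ δ⁻¹ with hK_def
  have hK : 0 ≤ K := mul_nonneg hLf (Real.rpow_nonneg hC₁ _)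
  have hghbound : ∀ s ∈ Set.Ioc sᵢ t, |g s - h s| ≤ C₁ ^ δ⁻¹ * φ s := by
    intro s hs
    have hs0' : 0 ≤ φ s := hφ0 s (hsub ⟨hs.1.le, hs.2⟩)
    have h1 := hgh1 s ⟨hs.1, le_trans hs.2 htt1⟩
    have h2 : (|g s - h s| ^ δ) ^ δ⁻¹ ≤ (C₁ * φ s ^ δ) ^ δ⁻¹ :=
      Real.rpow_le_rpow (Real.rpow_nonneg (abs_nonneg _) _) h1 (by positivity)
    rwa [Real.rpow_rpow_inv (abs_nonneg _) hδ0.ne',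
      Real.mul_rpow hC₁ (Real.rpow_nonneg hs0' _),
      Real.rpow_rpow_inv hs0' hδ0.ne'] at h2
  -- bound the integral
  have hIbound : |∫ s in sᵢ..t, N s * (f s (g s) - f s (h s))| ≤
      |∫ s in sᵢ..t, K * (N s * φ s)| := by
    rw [← Real.norm_eq_abs]
    apply intervalIntegral.norm_integral_le_abs_of_norm_le _ (hNφ_int.const_mul K)
    refine (MeasureTheory.ae_restrict_iff' measurableSet_uIoc).2
      (Filter.Eventually.of_forall fun s hs => ?_)
    rw [Set.uIoc_of_le hst.le] at hs
    have hN0 := hNnonneg s ⟨hs.1.le, hs.2⟩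
    rw [Real.norm_eq_abs, abs_mul, abs_of_nonneg hN0]
    calc N s * |f s (g s) - f s (h s)| ≤ N s * (Lf * |g s - h s|) :=
          mul_le_mul_of_nonneg_left (hf s (g s) (h s)) hN0
      _ ≤ N s * (Lf * (C₁ ^ δ⁻¹ * φ s)) := by
          apply mul_le_mul_of_nonneg_left _ hN0
          exact mul_le_mul_of_nonneg_left (hghbound s hs) hLf
      _ = K * (N s * φ s) := by ring
  have hIval : |∫ s in sᵢ..t, K * (N s * φ s)| = K * ∫ s in sᵢ..t, N s * φ s := by
    rw [intervalIntegral.integral_const_mul, abs_mul, abs_of_nonneg hK,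
      abs_of_nonneg]
    apply intervalIntegral.integral_nonneg hst.le
    intro u hu
    exact mul_nonneg (hNnonneg u hu) (hφ0 u (hsub hu))
  -- combine: bound on |B|
  have hH4t := hH4 t htmem
  have hB : |c * ∫ s in sᵢ..t, N s * (f s (g s) - f s (h s))| ≤ K * (Cφ * φ t) := by
    rw [abs_mul, abs_of_nonneg hc.le]
    calc c * |∫ s in sᵢ..t, N s * (f s (g s) - f s (h s))|
        ≤ c * (K * ∫ s in sᵢ..t, N s * φ s) := by
          apply mul_le_mul_of_nonneg_left _ hc.le
          rw [← hIval]; exact hIbound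
      _ = K * (c * ∫ s in sᵢ..t, N s * φ s) := by ring
      _ ≤ K * (Cφ * φ t) := mul_le_mul_of_nonneg_left hH4t hK
  -- bound on |A|
  have hA : |A| ≤ Lgi * |gp - hp| := hgi sᵢ gp hp
  have hAδ : |A| ^ δ ≤ Lgi ^ δ * (C₂ * ξ ^ δ) := by
    calc |A| ^ δ ≤ (Lgi * |gp - hp|) ^ δ :=
          Real.rpow_le_rpow (abs_nonneg _) hA hδ0.le
      _ = Lgi ^ δ * |gp - hp| ^ δ := Real.mul_rpow hLgi (abs_nonneg _)
      _ ≤ Lgi ^ δ * (C₂ * ξ ^ δ) :=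
          mul_le_mul_of_nonneg_left hgh2 (Real.rpow_nonneg hLgi _)
  -- bound on |B|^δ
  set B : ℝ := c * ∫ s in sᵢ..t, N s * (f s (g s) - f s (h s)) with hB_def
  have hBδ : |B| ^ δ ≤ Lf ^ δ * Cφ ^ δ * (C₁ * φ t ^ δ) := by
    calc |B| ^ δ ≤ (K * (Cφ * φ t)) ^ δ :=
          Real.rpow_le_rpow (abs_nonneg _) hB hδ0.le
      _ = Lf ^ δ * Cφ ^ δ * (C₁ * φ t ^ δ) := by
          rw [Real.mul_rpow hK (mul_nonneg hCφ hφt),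
            Real.mul_rpow hCφ hφt, hK_def,
            Real.mul_rpow hLf (Real.rpow_nonneg hC₁ _),
            Real.rpow_inv_rpow hC₁ hδ0.ne']
          ring
  -- final combination
  have habs : |A + B| ^ δ ≤ |A| ^ δ + |B| ^ δ := by
    calc |A + B| ^ δ ≤ (|A| + |B|) ^ δ :=
          Real.rpow_le_rpow (abs_nonneg _) (abs_add_le A B) hδ0.le
      _ ≤ |A| ^ δ + |B| ^ δ :=
          add_rpow_le_rpow_add (abs_nonneg _) (abs_nonneg _) hδ0.le hδ1
  have hLgiδ : 0 ≤ Lgi ^ δ := Real.rpow_nonneg hLgi _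
  have hLfδ : 0 ≤ Lf ^ δ := Real.rpow_nonneg hLf _
  have hCφδ : 0 ≤ Cφ ^ δ := Real.rpow_nonneg hCφ _
  have hmain : |A + B| ^ δ ≤ Lgi ^ δ * (C₂ * ξ ^ δ) + Lf ^ δ * Cφ ^ δ * (C₁ * φ t ^ δ) :=
    habs.trans (add_le_add hAδ hBδ)
  refine hmain.trans ?_
  nlinarith [mul_nonneg (mul_nonneg hLgiδ hC₁) hφtδ, mul_nonneg (mul_nonneg hLgiδ hC₁) hξδ,
    mul_nonneg (mul_nonneg hLgiδ hC₂) hφtδ, mul_nonneg (mul_nonneg (mul_nonneg hLfδ hCφδ) hC₁) hξδ,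
    mul_nonneg (mul_nonneg (mul_nonneg hLfδ hCφδ) hC₂) hφtδ,
    mul_nonneg (mul_nonneg (mul_nonneg hLfδ hCφδ) hC₂) hξδ]
end

section
/- Theorem (generalized δ-Ulam–Hyers–Rassias stability, one-interval case without impulses): Let J = [0,T], 0 < α ≤ 1, 0 ≤ β ≤ 1, γ = α + β(1−α), 0 < δ ≤ 1, ψ : J → ℝ C¹ increasing with ψ' > 0, and f : J × ℝ → ℝ continuous with Lipschitz constant L_f in the second variable. Let φ : J → (0,∞) be continuous nondecreasing with (1/Γ(α))∫₀ᵗ N_ψ^α(t,s)φ(s)ds ≤ C_φ φ(t) for all t. Assume L_f^δ C_φ^δ < 1. If a continuous y : J → ℝ satisfies |y(t) − Ψ(t)x₀ − (1/Γ(α))∫₀ᵗ N_ψ^α(t,s) f(s,y(s))ds| ≤ (1/Γ(α))∫₀ᵗ N_ψ^α(t,s)φ(s)ds for all t, then there exists a unique continuous y₀ : J → ℝ with y₀(t) = Ψ(t)x₀ + (1/Γ(α))∫₀ᵗ N_ψ^α(t,s) f(s,y₀(s))ds for all t, and |y(t) − y₀(t)|^δ ≤ C_φ^δ φ(t)^δ/(1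 − L_f^δ C_φ^δ) for all t ∈ J. -/
open intervalIntegral MeasureTheory Set

lemma psi_lb (T : ℝ) (ψ : ℝ → ℝ) (hψ : ContDiff ℝ 1 ψ) (m : ℝ)
    (hm : ∀ t ∈ Set.Icc 0 T, m ≤ deriv ψ t) :
    ∀ s ∈ Set.Icc (0:ℝ) T, ∀ b ∈ Set.Icc (0:ℝ) T, s ≤ b → m * (b - s) ≤ ψ b - ψ s := by
  intro s hs b hb hsb
  have hd : ∀ x : ℝ, HasDerivAt (fun x => ψ x - m * x) (deriv ψ x - m) x := fun x =>
    ((hψ.differentiable one_ne_zero x).hasDerivAt).sub (((hasDerivAt_id x).const_mul m).congr_deriv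
      (by ring))
  have hmono : MonotoneOn (fun x => ψ x - m * x) (Set.Icc 0 T) := by
    apply monotoneOn_of_deriv_nonneg (convex_Icc 0 T)
    · exact (hψ.continuous.sub (continuous_const.mul continuous_id)).continuousOn
    · intro x hx
      exact ((hd x).differentiableAt).differentiableWithinAt
    · intro x hx
      rw [interior_Icc] at hx
      rw [(hd x).deriv]
      have := hm x ⟨hx.1.le, hx.2.le⟩
      linarith
  have := hmono hs hb hsb
  simp only at this
  nlinarith

lemma ker_int (T : ℝ) (α : ℝ) (hα0 : 0 < α) (hα1 : α ≤ 1)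
    (ψ : ℝ → ℝ) (hψ : ContDiff ℝ 1 ψ) (m : ℝ) (hm0 : 0 < m)
    (hm : ∀ t ∈ Set.Icc 0 T, m ≤ deriv ψ t)
    (a b c : ℝ) (ha : 0 ≤ a) (hab : a ≤ b) (hbT : b ≤ T) (hc : ψ b ≤ c)
    (g : ℝ → ℝ) (hg : Continuous g) :
    IntervalIntegrable (fun s => deriv ψ s * (c - ψ s) ^ (α - 1) * g s) volume a b := by
  obtain ⟨Mg, hMg⟩ : ∃ Mg : ℝ, ∀ s ∈ Set.Icc a b, |deriv ψ s * g s| ≤ Mg := by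
    have hc1 : ContinuousOn (fun s => |deriv ψ s * g s|) (Set.Icc a b) :=
      (((hψ.continuous_deriv le_rfl).mul hg).abs).continuousOn
    rcases (isCompact_Icc).exists_bound_of_continuousOn hc1 with ⟨C, hC⟩
    exact ⟨C, fun s hs => by have := hC s hs; rwa [Real.norm_eq_abs, abs_abs] at this⟩
  have hMg0 : 0 ≤ Mg := le_trans (abs_nonneg _) (hMg a ⟨le_rfl, hab⟩)
  -- dominating function
  set D : ℝ → ℝ := fun s => Mg * (m ^ (α - 1) * (b - s) ^ (α - 1)) with hD
  have hDint : IntervalIntegrable D volume a b := by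
    have h1 : IntervalIntegrable (fun x : ℝ => x ^ (α - 1)) volume 0 (b - a) :=
      intervalIntegrable_rpow' (by linarith)
    have h2 := h1.comp_sub_left b
    simp only [sub_sub_cancel, sub_zero] at h2
    exact ((h2.const_mul (m ^ (α - 1))).const_mul Mg).symm
  have hmeas : AEStronglyMeasurable (fun s => deriv ψ s * (c - ψ s) ^ (α - 1) * g s)
      (volume.restrict (Set.uIoc a b)) := by
    have : Measurable fun s => deriv ψ s * (c - ψ s) ^ (α - 1) * g s := by
      have h1 := (hψ.continuous_deriv le_rfl).measurable
      have h2 := hg.measurable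
      have h3 := hψ.continuous.measurable
      measurability
    exact this.aestronglyMeasurable
  apply hDint.mono_fun hmeas
  rw [Set.uIoc_of_le hab]
  have hne : ∀ᵐ s : ℝ ∂(volume.restrict (Set.Ioc a b)), s ≠ b :=
    ae_restrict_of_ae (by simp [Filter.Eventually, MeasureTheory.mem_ae_iff])
  filter_upwards [ae_restrict_mem measurableSet_Ioc, hne] with s hs hsb
  have hsb' : s < b := lt_of_le_of_ne hs.2 hsb
  have hsIcc : s ∈ Set.Icc (0:ℝ) T := ⟨le_trans ha hs.1.le, le_trans hs.2 hbT⟩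
  have hlb : m * (b - s) ≤ c - ψ s := by
    have := psi_lb T ψ hψ m hm s hsIcc b ⟨le_trans ha hab, hbT⟩ hs.2
    linarith
  have hpos : 0 < m * (b - s) := mul_pos hm0 (by linarith)
  have key : (c - ψ s) ^ (α - 1) ≤ m ^ (α - 1) * (b - s) ^ (α - 1) := by
    calc (c - ψ s) ^ (α - 1) ≤ (m * (b - s)) ^ (α - 1) :=
          Real.rpow_le_rpow_of_nonpos hpos hlb (by linarith)
      _ = m ^ (α - 1) * (b - s) ^ (α - 1) := Real.mul_rpow hm0.le (by linarith)
  have hk0 : 0 ≤ (c - ψ s) ^ (α - 1) := Real.rpow_nonneg (by linarith) _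
  simp only [Real.norm_eq_abs, hD]
  calc |deriv ψ s * (c - ψ s) ^ (α - 1) * g s|
      = |deriv ψ s * g s| * (c - ψ s) ^ (α - 1) := by
        rw [abs_mul, abs_mul, abs_of_nonneg hk0, abs_mul]; ring
    _ ≤ Mg * (m ^ (α - 1) * (b - s) ^ (α - 1)) := by
        have h1 := hMg s ⟨hs.1.le, hs.2⟩
        have h2 : 0 ≤ m ^ (α-1) * (b - s) ^ (α-1) :=
          mul_nonneg (Real.rpow_nonneg hm0.le _) (Real.rpow_nonneg (by linarith) _)
        nlinarith [abs_nonneg (deriv ψ s * g s)]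
    _ ≤ |Mg * (m ^ (α - 1) * (b - s) ^ (α - 1))| := le_abs_self _

lemma ker_ftc (T : ℝ) (α : ℝ) (hα0 : 0 < α) (hα1 : α ≤ 1)
    (ψ : ℝ → ℝ) (hψ : ContDiff ℝ 1 ψ) (hmono : StrictMonoOn ψ (Set.Icc 0 T))
    (a b c : ℝ) (ha : 0 ≤ a) (hab : a ≤ b) (hbT : b ≤ T) (hc : ψ b ≤ c)
    (hint : IntervalIntegrable (fun s => deriv ψ s * (c - ψ s) ^ (α - 1)) volume a b) :
    ∫ s in a..b, deriv ψ s * (c - ψ s) ^ (α - 1)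
      = ((c - ψ a) ^ α - (c - ψ b) ^ α) / α := by
  have hrpow : Continuous fun x : ℝ => x ^ α :=
    continuous_iff_continuousAt.mpr fun x => Real.continuousAt_rpow_const x α (Or.inr hα0.le)
  set F : ℝ → ℝ := fun s => (c - ψ s) ^ α * (-(1/α)) with hF
  have hcont : ContinuousOn F (Set.Icc a b) :=
    (((hrpow.comp (continuous_const.sub hψ.continuous)).mul continuous_const)).continuousOn
  have hderiv : ∀ x ∈ Set.Ioo a b, HasDerivWithinAt F
      (deriv ψ x * (c - ψ x) ^ (α - 1)) (Set.Ioi x) x := by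
    intro x hx
    have hxIcc : x ∈ Set.Icc (0:ℝ) T := ⟨le_trans ha hx.1.le, le_trans hx.2.le hbT⟩
    have hlt : ψ x < c :=
      lt_of_lt_of_le (hmono hxIcc ⟨le_trans ha hab, hbT⟩ hx.2) hc
    have h1 : HasDerivAt (fun s => c - ψ s) (-(deriv ψ x)) x :=
      by have h := (hasDerivAt_const x c).sub (hψ.differentiable one_ne_zero x).hasDerivAt; rwa [zero_sub] at h
    have h2 := (h1.rpow_const (p := α) (Or.inl (by linarith : c - ψ x ≠ 0))).mul_const (-(1/α))
    have h3 : -deriv ψ x * α * (c - ψ x) ^ (α - 1) * -(1/α)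
        = deriv ψ x * (c - ψ x) ^ (α - 1) := by
      field_simp
    rw [h3] at h2
    exact h2.hasDerivWithinAt
  have := intervalIntegral.integral_eq_sub_of_hasDeriv_right_of_le hab hcont hderiv hint
  rw [this, hF]
  field_simp
  ring

lemma ker_est (T : ℝ) (α : ℝ) (hα0 : 0 < α) (hα1 : α ≤ 1)
    (ψ : ℝ → ℝ) (hψ : ContDiff ℝ 1 ψ) (hmono : StrictMonoOn ψ (Set.Icc 0 T))
    (m : ℝ) (hm0 : 0 < m) (hm : ∀ t ∈ Set.Icc 0 T, m ≤ deriv ψ t)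
    (g : ℝ → ℝ) (hg : Continuous g) (Mg : ℝ) (hMg0 : 0 ≤ Mg)
    (hMg : ∀ s ∈ Set.Icc (0:ℝ) T, |g s| ≤ Mg)
    (t' t : ℝ) (h0 : 0 ≤ t') (htt : t' ≤ t) (hT : t ≤ T) :
    |(∫ s in (0:ℝ)..t, deriv ψ s * (ψ t - ψ s) ^ (α - 1) * g s) -
      ∫ s in (0:ℝ)..t', deriv ψ s * (ψ t' - ψ s) ^ (α - 1) * g s| ≤
      2 * Mg / α * (ψ t - ψ t') ^ α := by
  have ht'T : t' ≤ T := le_trans htt hT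
  have h0T : (0:ℝ) ≤ T := le_trans h0 ht'T
  have hψt : ψ t' ≤ ψ t := hmono.monotoneOn ⟨h0, ht'T⟩ ⟨le_trans h0 htt, hT⟩ htt
  have hψm := hmono.monotoneOn
  -- integrability facts
  have hi1 : IntervalIntegrable (fun s => deriv ψ s * (ψ t - ψ s) ^ (α - 1) * g s) volume 0 t' :=
    ker_int T α hα0 hα1 ψ hψ m hm0 hm 0 t' (ψ t) le_rfl h0 ht'T hψt g hg
  have hi2 : IntervalIntegrable (fun s => deriv ψ s * (ψ t - ψ s) ^ (α - 1) * g s) volume t' t :=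
    ker_int T α hα0 hα1 ψ hψ m hm0 hm t' t (ψ t) h0 htt hT le_rfl g hg
  have hi3 : IntervalIntegrable (fun s => deriv ψ s * (ψ t' - ψ s) ^ (α - 1) * g s) volume 0 t' :=
    ker_int T α hα0 hα1 ψ hψ m hm0 hm 0 t' (ψ t') le_rfl h0 ht'T le_rfl g hg
  have hk1 : IntervalIntegrable (fun s => deriv ψ s * (ψ t - ψ s) ^ (α - 1)) volume 0 t' := by
    simpa using ker_int T α hα0 hα1 ψ hψ m hm0 hm 0 t' (ψ t) le_rfl h0 ht'T hψt
      (fun _ => 1) continuous_const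
  have hk2 : IntervalIntegrable (fun s => deriv ψ s * (ψ t - ψ s) ^ (α - 1)) volume t' t := by
    simpa using ker_int T α hα0 hα1 ψ hψ m hm0 hm t' t (ψ t) h0 htt hT le_rfl
      (fun _ => 1) continuous_const
  have hk3 : IntervalIntegrable (fun s => deriv ψ s * (ψ t' - ψ s) ^ (α - 1)) volume 0 t' := by
    simpa using ker_int T α hα0 hα1 ψ hψ m hm0 hm 0 t' (ψ t') le_rfl h0 ht'T le_rfl
      (fun _ => 1) continuous_const
  -- split
  have hsplit : (∫ s in (0:ℝ)..t, deriv ψ s * (ψ t - ψ s) ^ (α - 1) * g s)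
      = (∫ s in (0:ℝ)..t', deriv ψ s * (ψ t - ψ s) ^ (α - 1) * g s)
        + ∫ s in t'..t, deriv ψ s * (ψ t - ψ s) ^ (α - 1) * g s :=
    (integral_add_adjacent_intervals hi1 hi2).symm
  -- exact values of kernel integrals
  have hv1 : ∫ s in (0:ℝ)..t', deriv ψ s * (ψ t - ψ s) ^ (α - 1)
      = ((ψ t - ψ 0) ^ α - (ψ t - ψ t') ^ α) / α :=
    ker_ftc T α hα0 hα1 ψ hψ hmono 0 t' (ψ t) le_rfl h0 ht'T hψt hk1
  have hv2 : ∫ s in t'..t, deriv ψ s * (ψ t - ψ s) ^ (α - 1)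
      = ((ψ t - ψ t') ^ α - 0) / α := by
    rw [ker_ftc T α hα0 hα1 ψ hψ hmono t' t (ψ t) h0 htt hT le_rfl hk2, sub_self,
      Real.zero_rpow hα0.ne']
  have hv3 : ∫ s in (0:ℝ)..t', deriv ψ s * (ψ t' - ψ s) ^ (α - 1)
      = ((ψ t' - ψ 0) ^ α - 0) / α := by
    rw [ker_ftc T α hα0 hα1 ψ hψ hmono 0 t' (ψ t') le_rfl h0 ht'T le_rfl hk3, sub_self,
      Real.zero_rpow hα0.ne']
  -- bound |B|
  have hB : |∫ s in t'..t, deriv ψ s * (ψ t - ψ s) ^ (α - 1) * g s|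
      ≤ Mg * ((ψ t - ψ t') ^ α) / α := by
    have h1 := intervalIntegral.abs_integral_le_integral_abs (μ := volume) htt
      (f := fun s => deriv ψ s * (ψ t - ψ s) ^ (α - 1) * g s)
    have h2 : (∫ s in t'..t, |deriv ψ s * (ψ t - ψ s) ^ (α - 1) * g s|)
        ≤ ∫ s in t'..t, Mg * (deriv ψ s * (ψ t - ψ s) ^ (α - 1)) := by
      apply intervalIntegral.integral_mono_on htt hi2.abs ((hk2.const_mul Mg))
      intro s hs
      have hsIcc : s ∈ Set.Icc (0:ℝ) T := ⟨le_trans h0 hs.1, le_trans hs.2 hT⟩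
      have hd := hm s hsIcc
      have hr : (0:ℝ) ≤ (ψ t - ψ s) ^ (α - 1) := Real.rpow_nonneg
        (by have := hψm hsIcc ⟨le_trans h0 htt, hT⟩ hs.2; linarith) _
      have hgs := hMg s hsIcc
      rw [abs_mul, abs_mul, abs_of_nonneg (by linarith : (0:ℝ) ≤ deriv ψ s), abs_of_nonneg hr]
      have h3 : (0:ℝ) ≤ deriv ψ s * (ψ t - ψ s) ^ (α - 1) := mul_nonneg (by linarith) hr
      calc deriv ψ s * (ψ t - ψ s) ^ (α - 1) * |g s|
          ≤ deriv ψ s * (ψ t - ψ s) ^ (α - 1) * Mg := by nlinarith [abs_nonneg (g s)]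
        _ = Mg * (deriv ψ s * (ψ t - ψ s) ^ (α - 1)) := by ring
      
    have h3 : (∫ s in t'..t, Mg * (deriv ψ s * (ψ t - ψ s) ^ (α - 1)))
        = Mg * ((ψ t - ψ t') ^ α) / α := by
      rw [intervalIntegral.integral_const_mul, hv2]; ring
    calc |∫ s in t'..t, deriv ψ s * (ψ t - ψ s) ^ (α - 1) * g s| ≤ _ := h1
      _ ≤ _ := h2
      _ = _ := h3
  -- bound |A|
  have hA : |(∫ s in (0:ℝ)..t', deriv ψ s * (ψ t - ψ s) ^ (α - 1) * g s) -
      ∫ s in (0:ℝ)..t', deriv ψ s * (ψ t' - ψ s) ^ (α - 1) * g s|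
      ≤ Mg * ((ψ t - ψ t') ^ α) / α := by
    rw [← intervalIntegral.integral_sub hi1 hi3]
    have h1 := intervalIntegral.abs_integral_le_integral_abs (μ := volume) h0
      (f := fun s => deriv ψ s * (ψ t - ψ s) ^ (α - 1) * g s
        - deriv ψ s * (ψ t' - ψ s) ^ (α - 1) * g s)
    have h2 : (∫ s in (0:ℝ)..t', |deriv ψ s * (ψ t - ψ s) ^ (α - 1) * g s
        - deriv ψ s * (ψ t' - ψ s) ^ (α - 1) * g s|)
        ≤ ∫ s in (0:ℝ)..t', Mg * (deriv ψ s * (ψ t' - ψ s) ^ (α - 1)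
            - deriv ψ s * (ψ t - ψ s) ^ (α - 1)) := by
      apply intervalIntegral.integral_mono_ae_restrict h0 (hi1.sub hi3).abs
        ((hk3.sub hk1).const_mul Mg)
      have hne : ∀ᵐ s : ℝ ∂(volume.restrict (Set.Icc 0 t')), s ≠ t' :=
        ae_restrict_of_ae (by simp [Filter.Eventually, MeasureTheory.mem_ae_iff])
      filter_upwards [ae_restrict_mem measurableSet_Icc, hne] with s hs hst'
      have hslt : s < t' := lt_of_le_of_ne hs.2 hst'
      have hsIcc : s ∈ Set.Icc (0:ℝ) T := ⟨hs.1, le_trans hs.2 ht'T⟩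
      have hd := hm s hsIcc
      have hgs := hMg s hsIcc
      have hp1 : (0:ℝ) < ψ t' - ψ s := by
        have := hmono hsIcc ⟨h0, ht'T⟩ hslt; linarith
      have hle : (ψ t - ψ s) ^ (α - 1) ≤ (ψ t' - ψ s) ^ (α - 1) :=
        Real.rpow_le_rpow_of_nonpos hp1 (by linarith) (by linarith)
      have hr : (0:ℝ) ≤ (ψ t - ψ s) ^ (α - 1) := Real.rpow_nonneg (by linarith) _
      have key : |deriv ψ s * (ψ t - ψ s) ^ (α - 1) * g s
          - deriv ψ s * (ψ t' - ψ s) ^ (α - 1) * g s|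
          = deriv ψ s * ((ψ t' - ψ s) ^ (α - 1) - (ψ t - ψ s) ^ (α - 1)) * |g s| := by
        rw [show deriv ψ s * (ψ t - ψ s) ^ (α - 1) * g s
            - deriv ψ s * (ψ t' - ψ s) ^ (α - 1) * g s
            = -(deriv ψ s * ((ψ t' - ψ s) ^ (α - 1) - (ψ t - ψ s) ^ (α - 1)) * g s) by ring,
          abs_neg, abs_mul]
        congr 1
        exact abs_of_nonneg (mul_nonneg (by linarith) (by linarith))
      rw [key]
      have h4 : (0:ℝ) ≤ deriv ψ s * ((ψ t' - ψ s) ^ (α - 1) - (ψ t - ψ s) ^ (α - 1)) :=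
        mul_nonneg (by linarith) (by linarith)
      calc deriv ψ s * ((ψ t' - ψ s) ^ (α - 1) - (ψ t - ψ s) ^ (α - 1)) * |g s|
          ≤ deriv ψ s * ((ψ t' - ψ s) ^ (α - 1) - (ψ t - ψ s) ^ (α - 1)) * Mg := by
            nlinarith [abs_nonneg (g s)]
        _ = Mg * (deriv ψ s * (ψ t' - ψ s) ^ (α - 1) - deriv ψ s * (ψ t - ψ s) ^ (α - 1)) := by
            ring
    have h3 : (∫ s in (0:ℝ)..t', Mg * (deriv ψ s * (ψ t' - ψ s) ^ (α - 1)
          - deriv ψ s * (ψ t - ψ s) ^ (α - 1)))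
        ≤ Mg * ((ψ t - ψ t') ^ α) / α := by
      rw [intervalIntegral.integral_const_mul, intervalIntegral.integral_sub hk3 hk1, hv3, hv1]
      have hψ0t' : (ψ t' - ψ 0) ^ α ≤ (ψ t - ψ 0) ^ α := by
        apply Real.rpow_le_rpow _ _ hα0.le
        · have := hψm ⟨le_rfl, h0T⟩ ⟨h0, ht'T⟩ h0; linarith
        · linarith
      have h5 : (ψ t' - ψ 0) ^ α - 0 - ((ψ t - ψ 0) ^ α - (ψ t - ψ t') ^ α)
          ≤ (ψ t - ψ t') ^ α := by linarith
      calc Mg * (((ψ t' - ψ 0) ^ α - 0) / α - ((ψ t - ψ 0) ^ α - (ψ t - ψ t') ^ α) / α)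
          = Mg * (((ψ t' - ψ 0) ^ α - 0 - ((ψ t - ψ 0) ^ α - (ψ t - ψ t') ^ α)) / α) := by
            ring
        _ ≤ Mg * ((ψ t - ψ t') ^ α / α) :=
            mul_le_mul_of_nonneg_left ((div_le_div_iff_of_pos_right hα0).mpr h5) hMg0
        _ = Mg * (ψ t - ψ t') ^ α / α := by ring
    calc _ ≤ _ := h1
      _ ≤ _ := h2
      _ ≤ _ := h3
  calc |(∫ s in (0:ℝ)..t, deriv ψ s * (ψ t - ψ s) ^ (α - 1) * g s) -
      ∫ s in (0:ℝ)..t', deriv ψ s * (ψ t' - ψ s) ^ (α - 1) * g s|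
      = |((∫ s in (0:ℝ)..t', deriv ψ s * (ψ t - ψ s) ^ (α - 1) * g s) -
          ∫ s in (0:ℝ)..t', deriv ψ s * (ψ t' - ψ s) ^ (α - 1) * g s)
          + ∫ s in t'..t, deriv ψ s * (ψ t - ψ s) ^ (α - 1) * g s| := by
        rw [hsplit]; ring_nf
    _ ≤ _ + _ := abs_add_le _ _
    _ ≤ Mg * ((ψ t - ψ t') ^ α) / α + Mg * ((ψ t - ψ t') ^ α) / α := add_le_add hA hB
    _ = 2 * Mg / α * (ψ t - ψ t') ^ α := by ring

lemma ker_contOn (T : ℝ) (α : ℝ) (hα0 : 0 < α) (hα1 : α ≤ 1)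
    (ψ : ℝ → ℝ) (hψ : ContDiff ℝ 1 ψ) (hmono : StrictMonoOn ψ (Set.Icc 0 T))
    (m : ℝ) (hm0 : 0 < m) (hm : ∀ t ∈ Set.Icc 0 T, m ≤ deriv ψ t)
    (g : ℝ → ℝ) (hg : Continuous g) (Mg : ℝ) (hMg0 : 0 ≤ Mg)
    (hMg : ∀ s ∈ Set.Icc (0:ℝ) T, |g s| ≤ Mg) :
    ContinuousOn (fun t => ∫ s in (0:ℝ)..t, deriv ψ s * (ψ t - ψ s) ^ (α - 1) * g s)
      (Set.Icc 0 T) := by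
  intro t₀ ht₀
  rw [Metric.continuousWithinAt_iff]
  intro ε hε
  -- the comparison function
  have hG : ContinuousAt (fun t => 2 * Mg / α * |ψ t - ψ t₀| ^ α) t₀ := by
    have h1 : Continuous fun x : ℝ => x ^ α :=
      continuous_iff_continuousAt.mpr fun x => Real.continuousAt_rpow_const x α (Or.inr hα0.le)
    exact (continuous_const.mul (h1.comp (hψ.continuous.sub continuous_const).abs)).continuousAt
  have hG0 : (2 * Mg / α * |ψ t₀ - ψ t₀| ^ α) = 0 := by
    simp [Real.zero_rpow hα0.ne']
  have hev : ∀ᶠ x in nhds t₀, 2 * Mg / α * |ψ x - ψ t₀| ^ α < ε := by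
    have h := hG
    rw [ContinuousAt, hG0] at h
    exact h.eventually_lt_const hε
  rcases Metric.eventually_nhds_iff.mp hev with ⟨d, hd0, hd⟩
  refine ⟨d, hd0, fun {x} hx hxd => ?_⟩
  have hbound : dist (∫ s in (0:ℝ)..x, deriv ψ s * (ψ x - ψ s) ^ (α - 1) * g s)
      (∫ s in (0:ℝ)..t₀, deriv ψ s * (ψ t₀ - ψ s) ^ (α - 1) * g s)
      ≤ 2 * Mg / α * |ψ x - ψ t₀| ^ α := by
    rw [Real.dist_eq]
    rcases le_total t₀ x with hc | hc
    · have := ker_est T α hα0 hα1 ψ hψ hmono m hm0 hm g hg Mg hMg0 hMg t₀ x ht₀.1 hc hx.2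
      have habs : |ψ x - ψ t₀| = ψ x - ψ t₀ :=
        abs_of_nonneg (by have := hmono.monotoneOn ht₀ hx hc; linarith)
      rw [habs]
      exact this
    · have := ker_est T α hα0 hα1 ψ hψ hmono m hm0 hm g hg Mg hMg0 hMg x t₀ hx.1 hc ht₀.2
      have habs : |ψ x - ψ t₀| = ψ t₀ - ψ x := by
        rw [abs_of_nonpos (by have := hmono.monotoneOn hx ht₀ hc; linarith :
          ψ x - ψ t₀ ≤ 0)]; ring
      rw [abs_sub_comm, habs]
      exact this
  have hd' := hd (by rwa [Real.dist_eq] at hxd)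
  exact lt_of_le_of_lt hbound hd'
theorem stmt_17 (T : ℝ) (hT : 0 < T)
    (α β γ : ℝ) (hα0 : 0 < α) (hα1 : α ≤ 1) (hβ0 : 0 ≤ β) (hβ1 : β ≤ 1)
    (hγ : γ = α + β * (1 - α))
    (δ : ℝ) (hδ0 : 0 < δ) (hδ1 : δ ≤ 1)
    (ψ : ℝ → ℝ) (hψ : ContDiff ℝ 1 ψ) (hmono : StrictMonoOn ψ (Set.Icc 0 T))
    (hψ' : ∀ t ∈ Set.Icc 0 T, 0 < deriv ψ t)
    (f : ℝ → ℝ → ℝ) (hfcont : Continuous fun p : ℝ × ℝ => f p.1 p.2)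
    (Lf : ℝ) (hLf : 0 ≤ Lf) (hf : ∀ t u v, |f t u - f t v| ≤ Lf * |u - v|)
    (φ : ℝ → ℝ) (hφpos : ∀ t ∈ Set.Icc 0 T, 0 < φ t)
    (hφcont : ContinuousOn φ (Set.Icc 0 T)) (hφmono : MonotoneOn φ (Set.Icc 0 T))
    (Cφ : ℝ) (hCφ : 0 < Cφ)
    (hH4 : ∀ t ∈ Set.Icc 0 T,
      (1 / Real.Gamma α) * ∫ s in (0 : ℝ)..t, deriv ψ s * (ψ t - ψ s) ^ (α - 1) * φ s ≤
        Cφ * φ t)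
    (hsmall : Lf ^ δ * Cφ ^ δ < 1)
    (x₀ : ℝ) (y : ℝ → ℝ) (hy : Continuous y)
    (hineq : ∀ t ∈ Set.Icc 0 T,
      |y t - (ψ t - ψ 0) ^ (γ - 1) / Real.Gamma γ * x₀ -
          (1 / Real.Gamma α) * ∫ s in (0 : ℝ)..t,
            deriv ψ s * (ψ t - ψ s) ^ (α - 1) * f s (y s)| ≤
        (1 / Real.Gamma α) * ∫ s in (0 : ℝ)..t,
          deriv ψ s * (ψ t - ψ s) ^ (α - 1) * φ s) :
    ∃ y₀ : ℝ → ℝ, Continuous y₀ ∧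
      (∀ t ∈ Set.Icc 0 T,
        y₀ t = (ψ t - ψ 0) ^ (γ - 1) / Real.Gamma γ * x₀ +
          (1 / Real.Gamma α) * ∫ s in (0 : ℝ)..t,
            deriv ψ s * (ψ t - ψ s) ^ (α - 1) * f s (y₀ s)) ∧
      (∀ t ∈ Set.Icc 0 T,
        |y t - y₀ t| ^ δ ≤ Cφ ^ δ * φ t ^ δ / (1 - Lf ^ δ * Cφ ^ δ)) ∧
      (∀ z : ℝ → ℝ, Continuous z →
        (∀ t ∈ Set.Icc 0 T,
          z t = (ψ t - ψ 0) ^ (γ - 1) / Real.Gamma γ * x₀ +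
            (1 / Real.Gamma α) * ∫ s in (0 : ℝ)..t,
              deriv ψ s * (ψ t - ψ s) ^ (α - 1) * f s (z s)) →
        ∀ t ∈ Set.Icc 0 T, z t = y₀ t) := by
  have h0T : (0:ℝ) ≤ T := hT.le
  have hΓα : 0 < Real.Gamma α := Real.Gamma_pos_of_pos hα0
  have hγ0 : 0 < γ := by nlinarith
  have hγle : γ ≤ 1 := by nlinarith
  have hΓγ : 0 < Real.Gamma γ := Real.Gamma_pos_of_pos hγ0
  -- min of deriv ψ
  obtain ⟨s₀, hs₀, hmin⟩ := isCompact_Icc.exists_isMinOn (Set.nonempty_Icc.mpr h0T)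
    ((hψ.continuous_deriv le_rfl).continuousOn (s := Set.Icc 0 T))
  set m : ℝ := deriv ψ s₀ with hmdef
  have hm0 : 0 < m := hψ' s₀ hs₀
  have hm : ∀ t ∈ Set.Icc (0:ℝ) T, m ≤ deriv ψ t := fun t ht => hmin ht
  have hψd : ∀ t ∈ Set.Icc (0:ℝ) T, 0 ≤ deriv ψ t := fun t ht => (hψ' t ht).le
  -- continuity of the inhomogeneous term
  set g₀ : ℝ → ℝ := fun t => (ψ t - ψ 0) ^ (γ - 1) / Real.Gamma γ * x₀ with hg₀def
  -- general bound on kernel integrals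
  have hIbnd : ∀ g : ℝ → ℝ, Continuous g → ∀ Mg : ℝ, 0 ≤ Mg →
      (∀ s ∈ Set.Icc (0:ℝ) T, |g s| ≤ Mg) → ∀ t ∈ Set.Icc (0:ℝ) T,
      |∫ s in (0:ℝ)..t, deriv ψ s * (ψ t - ψ s) ^ (α - 1) * g s|
        ≤ 2 * Mg / α * (ψ t - ψ 0) ^ α := by
    intro g hg Mg hMg0 hMg t ht
    have := ker_est T α hα0 hα1 ψ hψ hmono m hm0 hm g hg Mg hMg0 hMg 0 t le_rfl ht.1 ht.2
    simpa using this
  have hcase : γ = 1 ∨ x₀ = 0 := by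
    by_cases h1 : γ = 1
    · exact Or.inl h1
    right
    have hγlt : γ < 1 := lt_of_le_of_ne hγle h1
    by_contra hx
    have hx0 : 0 < |x₀| := abs_pos.mpr hx
    have hfy : Continuous fun s => f s (y s) := hfcont.comp (continuous_id.prodMk hy)
    obtain ⟨Mf, hMf⟩ := isCompact_Icc.exists_bound_of_continuousOn
      (hfy.continuousOn (s := Set.Icc (0:ℝ) T))
    obtain ⟨My, hMy⟩ := isCompact_Icc.exists_bound_of_continuousOn
      (hy.continuousOn (s := Set.Icc (0:ℝ) T))
    have hMf0 : 0 ≤ Mf := le_trans (norm_nonneg _) (hMf 0 ⟨le_rfl, h0T⟩)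
    have hMy0 : 0 ≤ My := le_trans (norm_nonneg _) (hMy 0 ⟨le_rfl, h0T⟩)
    set B : ℝ := My + (1 / Real.Gamma α) * (2 * Mf / α * (ψ T - ψ 0) ^ α) + Cφ * φ T
      with hBdef
    have hψT0 : (0:ℝ) ≤ ψ T - ψ 0 := by
      have := hmono.monotoneOn ⟨le_rfl, h0T⟩ ⟨h0T, le_rfl⟩ h0T; linarith
    have hB : ∀ t ∈ Set.Icc (0:ℝ) T, |g₀ t| ≤ B := by
      intro t ht
      have h2 := hineq t ht
      have h3 := hH4 t ht
      have hφT : φ t ≤ φ T := hφmono ht ⟨h0T, le_rfl⟩ ht.2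
      have h4 : |(1 / Real.Gamma α) * ∫ s in (0:ℝ)..t,
          deriv ψ s * (ψ t - ψ s) ^ (α - 1) * f s (y s)|
          ≤ (1 / Real.Gamma α) * (2 * Mf / α * (ψ T - ψ 0) ^ α) := by
        rw [abs_mul, abs_of_nonneg (by positivity : (0:ℝ) ≤ 1 / Real.Gamma α)]
        apply mul_le_mul_of_nonneg_left _ (by positivity)
        have h5 := hIbnd (fun s => f s (y s)) hfy Mf hMf0
          (fun s hs => by simpa using hMf s hs) t ht
        have h6 : (ψ t - ψ 0) ^ α ≤ (ψ T - ψ 0) ^ α := by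
          apply Real.rpow_le_rpow _ _ hα0.le
          · have := hmono.monotoneOn ⟨le_rfl, h0T⟩ ht ht.1; linarith
          · have := hmono.monotoneOn ht ⟨h0T, le_rfl⟩ ht.2; linarith
        calc |∫ s in (0:ℝ)..t, deriv ψ s * (ψ t - ψ s) ^ (α - 1) * f s (y s)|
            ≤ 2 * Mf / α * (ψ t - ψ 0) ^ α := h5
          _ ≤ 2 * Mf / α * (ψ T - ψ 0) ^ α :=
              mul_le_mul_of_nonneg_left h6 (by positivity)
      have h7 : |y t| ≤ My := by simpa using hMy t ht
      have h8 : (1 / Real.Gamma α) * (∫ s in (0:ℝ)..t,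
          deriv ψ s * (ψ t - ψ s) ^ (α - 1) * φ s) ≤ Cφ * φ T := by
        calc _ ≤ Cφ * φ t := h3
          _ ≤ Cφ * φ T := mul_le_mul_of_nonneg_left hφT hCφ.le
      have h9 : |g₀ t| ≤ |y t| + |y t - g₀ t - (1 / Real.Gamma α) * ∫ s in (0:ℝ)..t,
          deriv ψ s * (ψ t - ψ s) ^ (α - 1) * f s (y s)|
          + |(1 / Real.Gamma α) * ∫ s in (0:ℝ)..t,
            deriv ψ s * (ψ t - ψ s) ^ (α - 1) * f s (y s)| := by
        have := abs_sub_abs_le_abs_sub (y t) (g₀ t)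
        have h10 : g₀ t = y t - (y t - g₀ t - (1 / Real.Gamma α) * ∫ s in (0:ℝ)..t,
            deriv ψ s * (ψ t - ψ s) ^ (α - 1) * f s (y s))
            - (1 / Real.Gamma α) * ∫ s in (0:ℝ)..t,
              deriv ψ s * (ψ t - ψ s) ^ (α - 1) * f s (y s) := by ring
        calc |g₀ t| = |_| := congrArg abs h10
          _ ≤ _ := by
              apply le_trans (abs_sub _ _)
              exact add_le_add (abs_sub _ _) le_rfl
      rw [hBdef]
      have := hineq t ht
      linarith [h9, h4, h7, le_trans this h8]
    have hB0 : 0 ≤ B := le_trans (abs_nonneg _) (hB T ⟨h0T, le_rfl⟩)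
    set B' : ℝ := B * Real.Gamma γ / |x₀| + 1 with hB'def
    have hB'0 : 0 < B' := by positivity
    set ε : ℝ := B' ^ (-(1 - γ)⁻¹) with hεdef
    have hε0 : 0 < ε := Real.rpow_pos_of_pos hB'0 _
    have hεpow : ε ^ (γ - 1) = B' := by
      rw [hεdef, ← Real.rpow_mul hB'0.le]
      have h1γ : -(1 - γ)⁻¹ * (γ - 1) = 1 := by
        have : (1:ℝ) - γ ≠ 0 := by linarith
        field_simp
        ring
      rw [h1γ, Real.rpow_one]
    obtain ⟨d, hd0, hd⟩ := Metric.continuousAt_iff.mp hψ.continuous.continuousAt ε hε0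
    set t : ℝ := min (d / 2) T with htdef
    have ht0 : 0 < t := lt_min (by linarith) hT
    have htT : t ≤ T := min_le_right _ _
    have htIcc : t ∈ Set.Icc (0:ℝ) T := ⟨ht0.le, htT⟩
    have hdist : dist t 0 < d := by
      rw [Real.dist_eq, sub_zero, abs_of_pos ht0]
      calc t ≤ d / 2 := min_le_left _ _
        _ < d := by linarith
    have hψt : 0 < ψ t - ψ 0 := sub_pos.mpr (hmono ⟨le_rfl, h0T⟩ htIcc ht0)
    have hψtε : ψ t - ψ 0 ≤ ε := by
      have := hd hdist
      rw [Real.dist_eq] at this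
      have := le_of_lt (lt_of_abs_lt this)
      linarith
    have hkey : B' ≤ (ψ t - ψ 0) ^ (γ - 1) := by
      rw [← hεpow]
      exact Real.rpow_le_rpow_of_nonpos hψt hψtε (by linarith)
    have habs : |g₀ t| = (ψ t - ψ 0) ^ (γ - 1) / Real.Gamma γ * |x₀| := by
      rw [hg₀def]
      rw [abs_mul, abs_div, abs_of_pos (Real.rpow_pos_of_pos hψt _), abs_of_pos hΓγ]
    have hcontra := hB t htIcc
    rw [habs] at hcontra
    have : (ψ t - ψ 0) ^ (γ - 1) / Real.Gamma γ * |x₀| ≥ B' / Real.Gamma γ * |x₀| := by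
      apply mul_le_mul_of_nonneg_right _ hx0.le
      gcongr
    rw [hB'def] at this
    have hexp : (B * Real.Gamma γ / |x₀| + 1) / Real.Gamma γ * |x₀|
        = B + |x₀| / Real.Gamma γ := by
      field_simp
    rw [hexp] at this
    have : 0 < |x₀| / Real.Gamma γ := by positivity
    linarith

  have hg₀cont : Continuous g₀ := by
    rcases hcase with h | h
    · have : g₀ = fun _ => x₀ := by
        funext t
        simp [hg₀def, h, Real.Gamma_one]
      rw [this]; exact continuous_const
    · have : g₀ = fun _ => 0 := by
        funext t; simp [hg₀def, h]
      rw [this]; exact continuous_const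
  -- contraction constant
  set k : ℝ := Lf * Cφ with hkdef
  have hk0 : 0 ≤ k := mul_nonneg hLf hCφ.le
  have hkδ : k ^ δ = Lf ^ δ * Cφ ^ δ := Real.mul_rpow hLf hCφ.le
  have hkδ1 : k ^ δ < 1 := by rw [hkδ]; exact hsmall
  have hk1 : k < 1 := by
    by_contra h
    push_neg at h
    have : (1:ℝ) ≤ k ^ δ := by
      calc (1:ℝ) = 1 ^ δ := (Real.one_rpow δ).symm
        _ ≤ k ^ δ := Real.rpow_le_rpow zero_le_one h hδ0.le
    linarith
  have hkk : k ≤ k ^ δ := by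
    rcases eq_or_lt_of_le hk0 with h | h
    · rw [← h, Real.zero_rpow hδ0.ne']
    · calc k = k ^ (1:ℝ) := (Real.rpow_one k).symm
        _ ≤ k ^ δ := Real.rpow_le_rpow_of_exponent_ge h hk1.le hδ1
  -- the function space
  set proj : ℝ → (Set.Icc (0:ℝ) T) := Set.projIcc 0 T h0T with hprojdef
  set φc : C(Set.Icc (0:ℝ) T, ℝ) := ⟨(Set.Icc (0:ℝ) T).restrict φ, hφcont.restrict⟩
    with hφcdef
  have hφcpos : ∀ x : Set.Icc (0:ℝ) T, 0 < φc x := fun x => hφpos x x.2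
  set uw : C(Set.Icc (0:ℝ) T, ℝ) → ℝ → ℝ := fun w s => φc (proj s) * w (proj s) with huwdef
  have huwcont : ∀ w, Continuous (uw w) := fun w =>
    (φc.continuous.comp continuous_projIcc).mul (w.continuous.comp continuous_projIcc)
  have hprojmem : ∀ s : ℝ, ∀ hs : s ∈ Set.Icc (0:ℝ) T, proj s = ⟨s, hs⟩ := fun s hs =>
    Set.projIcc_of_mem h0T hs
  have huweq : ∀ w : C(Set.Icc (0:ℝ) T, ℝ), ∀ s : ℝ, ∀ hs : s ∈ Set.Icc (0:ℝ) T,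
      uw w s = φ s * w ⟨s, hs⟩ := by
    intro w s hs
    rw [huwdef]
    simp only [hprojmem s hs]
    rfl
  have hfw : ∀ w, Continuous fun s => f s (uw w s) := fun w =>
    hfcont.comp (continuous_id.prodMk (huwcont w))
  -- continuity of kernel integral
  have hIcont : ∀ g : ℝ → ℝ, Continuous g →
      ContinuousOn (fun t => ∫ s in (0:ℝ)..t, deriv ψ s * (ψ t - ψ s) ^ (α - 1) * g s)
        (Set.Icc 0 T) := by
    intro g hg
    obtain ⟨Mg, hMg⟩ := isCompact_Icc.exists_bound_of_continuousOn
      (hg.continuousOn (s := Set.Icc (0:ℝ) T))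
    exact ker_contOn T α hα0 hα1 ψ hψ hmono m hm0 hm g hg Mg
      (le_trans (norm_nonneg _) (hMg 0 ⟨le_rfl, h0T⟩))
      (fun s hs => by simpa using hMg s hs)
  have hΘc : ∀ w : C(Set.Icc (0:ℝ) T, ℝ), Continuous fun x : Set.Icc (0:ℝ) T =>
      (g₀ x + (1 / Real.Gamma α) * ∫ s in (0:ℝ)..(x:ℝ),
        deriv ψ s * (ψ x - ψ s) ^ (α - 1) * f s (uw w s)) / φc x := by
    intro w
    apply Continuous.div _ φc.continuous fun x => (hφcpos x).ne'
    exact (hg₀cont.comp continuous_subtype_val).add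
      (continuous_const.mul ((hIcont _ (hfw w)).restrict))
  set Θ : C(Set.Icc (0:ℝ) T, ℝ) → C(Set.Icc (0:ℝ) T, ℝ) := fun w =>
    ⟨fun x => (g₀ x + (1 / Real.Gamma α) * ∫ s in (0:ℝ)..(x:ℝ),
      deriv ψ s * (ψ x - ψ s) ^ (α - 1) * f s (uw w s)) / φc x, hΘc w⟩ with hΘdef
  -- the contraction estimate
  have hcontr : ∀ w₁ w₂, dist (Θ w₁) (Θ w₂) ≤ k * dist w₁ w₂ := by
    intro w₁ w₂
    rw [ContinuousMap.dist_le (mul_nonneg hk0 dist_nonneg)]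
    intro x
    have hx : (x:ℝ) ∈ Set.Icc (0:ℝ) T := x.2
    have hint1 : IntervalIntegrable
        (fun s => deriv ψ s * (ψ x - ψ s) ^ (α - 1) * f s (uw w₁ s)) volume 0 x :=
      ker_int T α hα0 hα1 ψ hψ m hm0 hm 0 x (ψ x) le_rfl hx.1 hx.2 le_rfl _ (hfw w₁)
    have hint2 : IntervalIntegrable
        (fun s => deriv ψ s * (ψ x - ψ s) ^ (α - 1) * f s (uw w₂ s)) volume 0 x :=
      ker_int T α hα0 hα1 ψ hψ m hm0 hm 0 x (ψ x) le_rfl hx.1 hx.2 le_rfl _ (hfw w₂)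
    have hintφ : IntervalIntegrable
        (fun s => deriv ψ s * (ψ x - ψ s) ^ (α - 1) * (Lf * dist w₁ w₂ * φc (proj s)))
        volume 0 x :=
      ker_int T α hα0 hα1 ψ hψ m hm0 hm 0 x (ψ x) le_rfl hx.1 hx.2 le_rfl _
        (continuous_const.mul (φc.continuous.comp continuous_projIcc))
    have hd0 : 0 ≤ dist w₁ w₂ := dist_nonneg
    -- pointwise bound
    have hptw : ∀ s ∈ Set.Icc (0:ℝ) (x:ℝ),
        |deriv ψ s * (ψ x - ψ s) ^ (α - 1) * f s (uw w₁ s)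
          - deriv ψ s * (ψ x - ψ s) ^ (α - 1) * f s (uw w₂ s)|
        ≤ deriv ψ s * (ψ x - ψ s) ^ (α - 1) * (Lf * dist w₁ w₂ * φc (proj s)) := by
      intro s hs
      have hsIcc : s ∈ Set.Icc (0:ℝ) T := ⟨hs.1, le_trans hs.2 hx.2⟩
      have hK0 : 0 ≤ deriv ψ s * (ψ x - ψ s) ^ (α - 1) := by
        apply mul_nonneg (hψd s hsIcc)
        apply Real.rpow_nonneg
        have := hmono.monotoneOn hsIcc hx hs.2
        linarith
      have hdiff : |f s (uw w₁ s) - f s (uw w₂ s)| ≤ Lf * dist w₁ w₂ * φc (proj s) := by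
        calc |f s (uw w₁ s) - f s (uw w₂ s)| ≤ Lf * |uw w₁ s - uw w₂ s| := hf s _ _
          _ = Lf * (φc (proj s) * |w₁ (proj s) - w₂ (proj s)|) := by
              rw [huwdef]
              simp only
              rw [← mul_sub, abs_mul, abs_of_pos (hφcpos (proj s))]
          _ ≤ Lf * (φc (proj s) * dist w₁ w₂) := by
              have h1 : |w₁ (proj s) - w₂ (proj s)| ≤ dist w₁ w₂ := by
                rw [← Real.dist_eq]
                exact ContinuousMap.dist_apply_le_dist (proj s)
              exact mul_le_mul_of_nonneg_left
                (mul_le_mul_of_nonneg_left h1 (hφcpos (proj s)).le) hLf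
          _ = Lf * dist w₁ w₂ * φc (proj s) := by ring
      calc |deriv ψ s * (ψ x - ψ s) ^ (α - 1) * f s (uw w₁ s)
          - deriv ψ s * (ψ x - ψ s) ^ (α - 1) * f s (uw w₂ s)|
          = deriv ψ s * (ψ x - ψ s) ^ (α - 1) * |f s (uw w₁ s) - f s (uw w₂ s)| := by
            rw [← mul_sub, abs_mul, abs_of_nonneg hK0]
        _ ≤ _ := mul_le_mul_of_nonneg_left hdiff hK0
    -- the integral inequality
    have hII : |(∫ s in (0:ℝ)..(x:ℝ), deriv ψ s * (ψ x - ψ s) ^ (α - 1) * f s (uw w₁ s))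
        - ∫ s in (0:ℝ)..(x:ℝ), deriv ψ s * (ψ x - ψ s) ^ (α - 1) * f s (uw w₂ s)|
        ≤ Lf * dist w₁ w₂ * ∫ s in (0:ℝ)..(x:ℝ), deriv ψ s * (ψ x - ψ s) ^ (α - 1) * φ s := by
      rw [← intervalIntegral.integral_sub hint1 hint2]
      have h1 := intervalIntegral.abs_integral_le_integral_abs (μ := volume) hx.1
        (f := fun s => deriv ψ s * (ψ x - ψ s) ^ (α - 1) * f s (uw w₁ s)
          - deriv ψ s * (ψ x - ψ s) ^ (α - 1) * f s (uw w₂ s))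
      have h2 : (∫ s in (0:ℝ)..(x:ℝ), |deriv ψ s * (ψ x - ψ s) ^ (α - 1) * f s (uw w₁ s)
          - deriv ψ s * (ψ x - ψ s) ^ (α - 1) * f s (uw w₂ s)|)
          ≤ ∫ s in (0:ℝ)..(x:ℝ),
            deriv ψ s * (ψ x - ψ s) ^ (α - 1) * (Lf * dist w₁ w₂ * φc (proj s)) :=
        intervalIntegral.integral_mono_on hx.1 (hint1.sub hint2).abs hintφ hptw
      have h3 : (∫ s in (0:ℝ)..(x:ℝ),
          deriv ψ s * (ψ x - ψ s) ^ (α - 1) * (Lf * dist w₁ w₂ * φc (proj s)))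
          = Lf * dist w₁ w₂
            * ∫ s in (0:ℝ)..(x:ℝ), deriv ψ s * (ψ x - ψ s) ^ (α - 1) * φc (proj s) := by
        rw [← intervalIntegral.integral_const_mul]
        apply intervalIntegral.integral_congr
        intro s hs
        simp only
        ring
      have h4 : (∫ s in (0:ℝ)..(x:ℝ), deriv ψ s * (ψ x - ψ s) ^ (α - 1) * φc (proj s))
          = ∫ s in (0:ℝ)..(x:ℝ), deriv ψ s * (ψ x - ψ s) ^ (α - 1) * φ s := by
        apply intervalIntegral.integral_congr
        intro s hs
        rw [Set.uIcc_of_le hx.1] at hs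
        have hsIcc : s ∈ Set.Icc (0:ℝ) T := ⟨hs.1, le_trans hs.2 hx.2⟩
        beta_reduce
        rw [hprojmem s hsIcc]
        rfl
      calc _ ≤ _ := h1
        _ ≤ _ := h2
        _ = _ := by rw [h3, h4]
    -- put together
    have hΘval : ∀ w : C(Set.Icc (0:ℝ) T, ℝ), (Θ w) x
        = (g₀ x + (1 / Real.Gamma α) * ∫ s in (0:ℝ)..(x:ℝ),
          deriv ψ s * (ψ x - ψ s) ^ (α - 1) * f s (uw w s)) / φc x := fun w => rfl
    rw [Real.dist_eq, hΘval w₁, hΘval w₂, div_sub_div_same]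
    have he1 : g₀ x + (1 / Real.Gamma α) * (∫ s in (0:ℝ)..(x:ℝ),
        deriv ψ s * (ψ x - ψ s) ^ (α - 1) * f s (uw w₁ s))
        - (g₀ x + (1 / Real.Gamma α) * ∫ s in (0:ℝ)..(x:ℝ),
          deriv ψ s * (ψ x - ψ s) ^ (α - 1) * f s (uw w₂ s))
        = (1 / Real.Gamma α) * ((∫ s in (0:ℝ)..(x:ℝ),
          deriv ψ s * (ψ x - ψ s) ^ (α - 1) * f s (uw w₁ s))
          - ∫ s in (0:ℝ)..(x:ℝ), deriv ψ s * (ψ x - ψ s) ^ (α - 1) * f s (uw w₂ s)) := by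
      ring
    rw [he1, abs_div, abs_mul, abs_of_pos (hφcpos x),
      abs_of_nonneg (by positivity : (0:ℝ) ≤ 1 / Real.Gamma α), div_le_iff₀ (hφcpos x)]
    calc 1 / Real.Gamma α * |(∫ s in (0:ℝ)..(x:ℝ),
        deriv ψ s * (ψ x - ψ s) ^ (α - 1) * f s (uw w₁ s))
        - ∫ s in (0:ℝ)..(x:ℝ), deriv ψ s * (ψ x - ψ s) ^ (α - 1) * f s (uw w₂ s)|
        ≤ 1 / Real.Gamma α * (Lf * dist w₁ w₂
          * ∫ s in (0:ℝ)..(x:ℝ), deriv ψ s * (ψ x - ψ s) ^ (α - 1) * φ s) :=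
          mul_le_mul_of_nonneg_left hII (by positivity)
      _ = Lf * dist w₁ w₂ * (1 / Real.Gamma α
          * ∫ s in (0:ℝ)..(x:ℝ), deriv ψ s * (ψ x - ψ s) ^ (α - 1) * φ s) := by ring
      _ ≤ Lf * dist w₁ w₂ * (Cφ * φ x) := by
          apply mul_le_mul_of_nonneg_left (hH4 x hx) (by positivity)
      _ = k * dist w₁ w₂ * φc x := by rw [hkdef]; show _ = _ * _ * φ (x:ℝ); ring
  -- the fixed point
  have hlip : LipschitzWith (Real.toNNReal k) Θ :=
    LipschitzWith.of_dist_le_mul (by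
      intro w₁ w₂
      rw [Real.coe_toNNReal k hk0]
      exact hcontr w₁ w₂)
  have hcw : ContractingWith (Real.toNNReal k) Θ := by
    constructor
    · rw [← NNReal.coe_lt_coe, Real.coe_toNNReal k hk0, NNReal.coe_one]
      exact hk1
    · exact hlip
  haveI : Nonempty C(Set.Icc (0:ℝ) T, ℝ) := ⟨0⟩
  set fp : C(Set.Icc (0:ℝ) T, ℝ) := ContractingWith.fixedPoint Θ hcw with hfpdef
  have hfix : Θ fp = fp := hcw.fixedPoint_isFixedPt
  refine ⟨uw fp, huwcont fp, ?_, ?_, ?_⟩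
  · -- the integral equation
    intro t ht
    have hφt := hφpos t ht
    have h1 : fp ⟨t, ht⟩ = (Θ fp) ⟨t, ht⟩ := by rw [hfix]
    have h2 : (Θ fp) ⟨t, ht⟩ = (g₀ t + (1 / Real.Gamma α) * ∫ s in (0:ℝ)..t,
        deriv ψ s * (ψ t - ψ s) ^ (α - 1) * f s (uw fp s)) / φ t := rfl
    rw [huweq fp t ht, h1, h2, mul_comm, div_mul_cancel₀ _ hφt.ne']
  · -- the stability estimate
    set wy : C(Set.Icc (0:ℝ) T, ℝ) := ⟨fun x => y ↑x / φc x,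
      (hy.comp continuous_subtype_val).div φc.continuous fun x => (hφcpos x).ne'⟩
      with hwydef
    have huwy : ∀ s : ℝ, ∀ hs : s ∈ Set.Icc (0:ℝ) T, uw wy s = y s := by
      intro s hs
      rw [huweq wy s hs]
      show φ s * (y s / φ s) = y s
      rw [mul_comm, div_mul_cancel₀ _ (hφpos s hs).ne']
    have hdist1 : dist wy (Θ wy) ≤ Cφ := by
      rw [ContinuousMap.dist_le hCφ.le]
      intro x
      have hx : (x:ℝ) ∈ Set.Icc (0:ℝ) T := x.2
      have hcongr : (∫ s in (0:ℝ)..(x:ℝ), deriv ψ s * (ψ x - ψ s) ^ (α - 1) * f s (uw wy s))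
          = ∫ s in (0:ℝ)..(x:ℝ), deriv ψ s * (ψ x - ψ s) ^ (α - 1) * f s (y s) := by
        apply intervalIntegral.integral_congr
        intro s hs
        rw [Set.uIcc_of_le hx.1] at hs
        beta_reduce
        rw [huwy s ⟨hs.1, le_trans hs.2 hx.2⟩]
      have hval : (Θ wy) x = (g₀ x + (1 / Real.Gamma α) * ∫ s in (0:ℝ)..(x:ℝ),
          deriv ψ s * (ψ x - ψ s) ^ (α - 1) * f s (y s)) / φc x := by
        show (g₀ x + (1 / Real.Gamma α) * ∫ s in (0:ℝ)..(x:ℝ),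
          deriv ψ s * (ψ x - ψ s) ^ (α - 1) * f s (uw wy s)) / φc x = _
        rw [hcongr]
      have hwyval : wy x = y ↑x / φc x := rfl
      rw [Real.dist_eq, hwyval, hval, div_sub_div_same, abs_div,
        abs_of_pos (hφcpos x), div_le_iff₀ (hφcpos x)]
      have he : y ↑x - (g₀ ↑x + (1 / Real.Gamma α) * ∫ s in (0:ℝ)..(x:ℝ),
          deriv ψ s * (ψ x - ψ s) ^ (α - 1) * f s (y s))
          = y ↑x - g₀ ↑x - (1 / Real.Gamma α) * ∫ s in (0:ℝ)..(x:ℝ),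
            deriv ψ s * (ψ x - ψ s) ^ (α - 1) * f s (y s) := by ring
      rw [he]
      calc |y ↑x - g₀ ↑x - (1 / Real.Gamma α) * ∫ s in (0:ℝ)..(x:ℝ),
          deriv ψ s * (ψ x - ψ s) ^ (α - 1) * f s (y s)|
          ≤ (1 / Real.Gamma α) * ∫ s in (0:ℝ)..(x:ℝ),
            deriv ψ s * (ψ x - ψ s) ^ (α - 1) * φ s := hineq ↑x hx
        _ ≤ Cφ * φ ↑x := hH4 ↑x hx
        _ = Cφ * φc x := rfl
    have honem : (0:ℝ) < 1 - k := by linarith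
    have hE : dist wy fp ≤ Cφ / (1 - k) := by
      have h1 := dist_triangle wy (Θ wy) fp
      have h2 : dist (Θ wy) fp = dist (Θ wy) (Θ fp) := by rw [hfix]
      have h3 := hcontr wy fp
      rw [le_div_iff₀ honem]
      nlinarith [dist_nonneg (x := wy) (y := fp)]
    intro t ht
    have hφt := hφpos t ht
    have h5 : |y t - uw fp t| ≤ Cφ * φ t / (1 - k) := by
      have h6 : |y t - uw fp t| = φ t * |wy ⟨t, ht⟩ - fp ⟨t, ht⟩| := by
        rw [huweq fp t ht]
        have hwyval : wy ⟨t, ht⟩ = y t / φ t := rfl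
        rw [hwyval]
        rw [show φ t * |y t / φ t - fp ⟨t, ht⟩| = |φ t| * |y t / φ t - fp ⟨t, ht⟩| by
          rw [abs_of_pos hφt]]
        rw [← abs_mul]
        congr 1
        field_simp
      rw [h6]
      have h7 : |wy ⟨t, ht⟩ - fp ⟨t, ht⟩| ≤ Cφ / (1 - k) := by
        refine le_trans ?_ hE
        rw [← Real.dist_eq]
        exact ContinuousMap.dist_apply_le_dist _
      calc φ t * |wy ⟨t, ht⟩ - fp ⟨t, ht⟩| ≤ φ t * (Cφ / (1 - k)) :=
            mul_le_mul_of_nonneg_left h7 hφt.le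
        _ = Cφ * φ t / (1 - k) := by ring
    have h8 := Real.rpow_le_rpow (abs_nonneg _) h5 hδ0.le
    have h9 : (Cφ * φ t / (1 - k)) ^ δ = Cφ ^ δ * φ t ^ δ / (1 - k) ^ δ := by
      rw [Real.div_rpow (by positivity) honem.le, Real.mul_rpow hCφ.le hφt.le]
    have h10 : 1 - Lf ^ δ * Cφ ^ δ ≤ (1 - k) ^ δ := by
      have h11 : 1 - k ≤ (1 - k) ^ δ := by
        calc 1 - k = (1 - k) ^ (1:ℝ) := (Real.rpow_one _).symm
          _ ≤ (1 - k) ^ δ := Real.rpow_le_rpow_of_exponent_ge honem (by linarith) hδ1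
      rw [← hkδ]; linarith
    have h12 : (0:ℝ) < 1 - Lf ^ δ * Cφ ^ δ := by linarith
    calc |y t - uw fp t| ^ δ ≤ (Cφ * φ t / (1 - k)) ^ δ := h8
      _ = Cφ ^ δ * φ t ^ δ / (1 - k) ^ δ := h9
      _ ≤ Cφ ^ δ * φ t ^ δ / (1 - Lf ^ δ * Cφ ^ δ) :=
          div_le_div_of_nonneg_left
            (mul_nonneg (Real.rpow_nonneg hCφ.le δ) (Real.rpow_nonneg hφt.le δ)) h12 h10
  · -- uniqueness
    intro z hz hzeq t ht
    set wz : C(Set.Icc (0:ℝ) T, ℝ) := ⟨fun x => z ↑x / φc x,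
      (hz.comp continuous_subtype_val).div φc.continuous fun x => (hφcpos x).ne'⟩
      with hwzdef
    have huwz : ∀ s : ℝ, ∀ hs : s ∈ Set.Icc (0:ℝ) T, uw wz s = z s := by
      intro s hs
      rw [huweq wz s hs]
      show φ s * (z s / φ s) = z s
      rw [mul_comm, div_mul_cancel₀ _ (hφpos s hs).ne']
    have hfz : Function.IsFixedPt Θ wz := by
      apply ContinuousMap.ext
      intro x
      have hx : (x:ℝ) ∈ Set.Icc (0:ℝ) T := x.2
      show (g₀ x + (1 / Real.Gamma α) * ∫ s in (0:ℝ)..(x:ℝ),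
        deriv ψ s * (ψ x - ψ s) ^ (α - 1) * f s (uw wz s)) / φc x = z ↑x / φc x
      congr 1
      have hcongr : (∫ s in (0:ℝ)..(x:ℝ), deriv ψ s * (ψ x - ψ s) ^ (α - 1) * f s (uw wz s))
          = ∫ s in (0:ℝ)..(x:ℝ), deriv ψ s * (ψ x - ψ s) ^ (α - 1) * f s (z s) := by
        apply intervalIntegral.integral_congr
        intro s hs
        rw [Set.uIcc_of_le hx.1] at hs
        beta_reduce
        rw [huwz s ⟨hs.1, le_trans hs.2 hx.2⟩]
      rw [hcongr]
      exact (hzeq ↑x hx).symm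
    have hwz : wz = fp := hcw.fixedPoint_unique hfz
    have h1 : uw fp t = φ t * fp ⟨t, ht⟩ := huweq fp t ht
    rw [h1, ← hwz]
    show z t = φ t * (z t / φ t)
    rw [mul_comm, div_mul_cancel₀ _ (hφpos t ht).ne']
end
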